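/- arXiv:2304.01286 — 3 statements merged into one kernel-verified Lean document; each statement's English description precedes it below -/
import Mathlib

section
/- A play ρ of the arena G is secret-revealing winning (i.e., L(ρ) is accepted by the DFA and every observation-equivalent play ρ' ∈ [ρ] also has L(ρ') accepted) if and only if the final belief b_n of the corresponding belief-augmented play satisfies b_n ⊆ S × F. -/
/-- A finite play of the arena `G` from initial state `s0`:
`n` is the length, `s i` the states, `a i` the actions. -/
structure Play (S A : Type) (T : S → A → S) (s0 : S) where
  n : ℕ
  s : ℕ → S
  a : ℕ → A
  h0 : s 0 = s0
  hstep : ∀ i < n, s (i + 1) = T (s i) (a i)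

/-- Belief update: given belief `b` and observation `o`, the next belief. -/
def beliefUpdate {S A Q Ω Γ : Type} (T : S → A → S) (δ : Q → Γ → Q)
    (L : S → Γ) (O : S → A → S → Ω) (b : Set (S × Q)) (o : Ω) : Set (S × Q) :=
  {p | ∃ sq ∈ b, ∃ abar : A, O sq.1 abar p.1 = o ∧ T sq.1 abar = p.1 ∧ δ sq.2 (L p.1) = p.2}

/-- The DFA state reached by tracing the labels of the play. -/
def qseq {S A Q Γ : Type} {T : S → A → S} {s0 : S}
    (δ : Q → Γ → Q) (L : S → Γ) (ι : Q) (ρ : Play S A T s0) : ℕ → Q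
  | 0 => δ ι (L (ρ.s 0))
  | i + 1 => δ (qseq δ L ι ρ i) (L (ρ.s (i + 1)))

/-- The attacker's belief sequence along the play. -/
def bseq {S A Q Ω Γ : Type} {s0 : S} (T : S → A → S) (δ : Q → Γ → Q)
    (L : S → Γ) (O : S → A → S → Ω) (ι : Q) (ρ : Play S A T s0) : ℕ → Set (S × Q)
  | 0 => {(ρ.s 0, δ ι (L (ρ.s 0)))}
  | i + 1 => beliefUpdate T δ L O (bseq T δ L O ι ρ i) (O (ρ.s i) (ρ.a i) (ρ.s (i + 1)))

/-- Two plays are observation-equivalent iff they have the same length and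
produce the same observation sequence. -/
def obsEquiv {S A Ω : Type} {T : S → A → S} {s0 : S} (O : S → A → S → Ω)
    (ρ ρ' : Play S A T s0) : Prop :=
  ρ.n = ρ'.n ∧ ∀ i < ρ.n, O (ρ.s i) (ρ.a i) (ρ.s (i + 1)) = O (ρ'.s i) (ρ'.a i) (ρ'.s (i + 1))

/-- A play is winning (accepted) iff the DFA state reached on its labels is accepting. -/
def accepted {S A Q Γ : Type} {T : S → A → S} {s0 : S}
    (δ : Q → Γ → Q) (L : S → Γ) (ι : Q) (F : Set Q) (ρ : Play S A T s0) : Prop :=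
  qseq δ L ι ρ ρ.n ∈ F

/-- DFA trace of a raw state sequence. -/
def qtr {S Q Γ : Type} (δ : Q → Γ → Q) (L : S → Γ) (ι : Q) (s : ℕ → S) : ℕ → Q
  | 0 => δ ι (L (s 0))
  | i + 1 => δ (qtr δ L ι s i) (L (s (i + 1)))

lemma qseq_eq_qtr {S A Q Γ : Type} {T : S → A → S} {s0 : S}
    (δ : Q → Γ → Q) (L : S → Γ) (ι : Q) (ρ : Play S A T s0) :
    ∀ i, qseq δ L ι ρ i = qtr δ L ι ρ.s i
  | 0 => rfl
  | i + 1 => by rw [qseq, qtr, qseq_eq_qtr δ L ι ρ i]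

lemma qtr_congr {S Q Γ : Type} (δ : Q → Γ → Q) (L : S → Γ) (ι : Q)
    {s s' : ℕ → S} : ∀ i, (∀ j ≤ i, s j = s' j) → qtr δ L ι s i = qtr δ L ι s' i
  | 0, h => by rw [qtr, qtr, h 0 le_rfl]
  | i + 1, h => by
    rw [qtr, qtr, h (i + 1) le_rfl,
      qtr_congr δ L ι i (fun j hj => h j (hj.trans (Nat.le_succ i)))]

lemma mem_bseq_iff_exists {S A Q Ω Γ : Type} (T : S → A → S) (δ : Q → Γ → Q)
    (L : S → Γ) (O : S → A → S → Ω) (ι : Q) {s0 : S} (ρ : Play S A T s0) :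
    ∀ i, ∀ p ∈ bseq T δ L O ι ρ i,
      ∃ s' : ℕ → S, ∃ a' : ℕ → A, s' 0 = s0 ∧
        (∀ j < i, s' (j + 1) = T (s' j) (a' j)) ∧
        (∀ j < i, O (s' j) (a' j) (s' (j + 1)) = O (ρ.s j) (ρ.a j) (ρ.s (j + 1))) ∧
        s' i = p.1 ∧ qtr δ L ι s' i = p.2 := by
  intro i
  induction i with
  | zero =>
    intro p hp
    simp only [bseq, Set.mem_singleton_iff] at hp
    exact ⟨ρ.s, ρ.a, ρ.h0, by omega, by omega, by rw [hp], by rw [hp]; rfl⟩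
  | succ i ih =>
    intro p hp
    obtain ⟨sq, hsq, abar, ho, ht, hq⟩ := hp
    obtain ⟨s', a', h0, hstep, hobs, hend, hqtr⟩ := ih sq hsq
    refine ⟨fun j => if j ≤ i then s' j else p.1,
      fun j => if j = i then abar else a' j, by simp [h0], ?_, ?_, by simp, ?_⟩
    · intro j hj
      rcases Nat.lt_succ_iff_lt_or_eq.mp hj with hj | rfl
      · have : j + 1 ≤ i := hj
        simp only [this, if_pos, Nat.le_of_lt hj, if_neg (Nat.ne_of_lt hj)]
        exact hstep j hj
      · simp [hend, ht]
    · intro j hj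
      rcases Nat.lt_succ_iff_lt_or_eq.mp hj with hj | rfl
      · have : j + 1 ≤ i := hj
        simp only [this, if_pos, Nat.le_of_lt hj, if_neg (Nat.ne_of_lt hj)]
        exact hobs j hj
      · simpa [hend] using ho
    · have : qtr δ L ι (fun j => if j ≤ i then s' j else p.1) i = sq.2 :=
        (qtr_congr δ L ι i (fun j hj => by simp [hj])).trans hqtr
      rw [qtr, this]
      simpa using hq

lemma play_mem_bseq {S A Q Ω Γ : Type} (T : S → A → S) (δ : Q → Γ → Q)
    (L : S → Γ) (O : S → A → S → Ω) (ι : Q) {s0 : S} (ρ ρ' : Play S A T s0)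
    (heq : obsEquiv O ρ ρ') :
    ∀ i, i ≤ ρ.n → (ρ'.s i, qseq δ L ι ρ' i) ∈ bseq T δ L O ι ρ i := by
  intro i
  induction i with
  | zero =>
    intro _
    simp only [bseq, qseq, Set.mem_singleton_iff, ρ.h0, ρ'.h0]
  | succ i ih =>
    intro hi
    have hi' : i < ρ.n := hi
    refine ⟨(ρ'.s i, qseq δ L ι ρ' i), ih (Nat.le_of_lt hi'), ρ'.a i, ?_, ?_, rfl⟩
    · exact (heq.2 i hi').symm
    · exact (ρ'.hstep i (heq.1 ▸ hi')).symm

/-- a play is secret-revealing winning (accepted, and every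
observation-equivalent play is accepted) iff its final belief is
contained in `S × F`. -/
theorem revealing_winning_iff_belief
    {S A Q Ω Γ : Type} (T : S → A → S) (δ : Q → Γ → Q) (L : S → Γ)
    (O : S → A → S → Ω) (ι : Q) (F : Set Q) (s0 : S)
    (habs : ∀ q ∈ F, ∀ σ : Γ, δ q σ = q)
    (ρ : Play S A T s0) :
    (accepted δ L ι F ρ ∧
      ∀ ρ' : Play S A T s0, obsEquiv O ρ ρ' → accepted δ L ι F ρ') ↔
    (∀ p ∈ bseq T δ L O ι ρ ρ.n, p.2 ∈ F) := by
  constructor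
  · rintro ⟨_, hall⟩ p hp
    obtain ⟨s', a', h0, hstep, hobs, hend, hqtr⟩ :=
      mem_bseq_iff_exists T δ L O ι ρ ρ.n p hp
    set ρ' : Play S A T s0 := ⟨ρ.n, s', a', h0, hstep⟩ with hρ'
    have hacc : qseq δ L ι ρ' ρ'.n ∈ F := hall ρ' ⟨rfl, fun i hi => (hobs i hi).symm⟩
    have : qseq δ L ι ρ' ρ'.n = p.2 := by
      rw [qseq_eq_qtr]; exact hqtr
    rwa [this] at hacc
  · intro hb
    have key : ∀ ρ' : Play S A T s0, obsEquiv O ρ ρ' → accepted δ L ι F ρ' := by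
      intro ρ' heq
      have h2 := hb _ (play_mem_bseq T δ L O ι ρ ρ' heq ρ.n le_rfl)
      show qseq δ L ι ρ' ρ'.n ∈ F
      rw [← heq.1]
      exact h2
    exact ⟨key ρ ⟨rfl, fun _ _ => rfl⟩, key⟩
end

section
/- Let Win_1 be Player 1's sure-winning region in the belief-augmented game for reaching 𝓕 = S × F × 2^(S×Q), and Win_1^opaque the sure-winning region for reaching 𝓕_O = {(s,q,b) : q ∈ F, b ∩ (S × (Q \ F)) ≠ ∅}. Then for any state v ∈ Win_1 \ Win_1^opaque, for every Player-1 strategy π_1 that sure-wins the reachability objective ◊𝓕 from v, there exists a Player-2 strategy (namely, any strategy keeping the play outside Win_1^opaque) such that every resulting play reaches a state (s_k, q_k, b_k) with b_k ⊆ S × F; that is, the secret is surely revealed when satisfied. -/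
/-- The deterministic transition function of the belief-augmented game on
states `(s, q, b) : S × Q × Set (S × Q)`. -/
def Δb {S A Q Ω Γ : Type} (T : S → A → S) (δ : Q → Γ → Q) (L : S → Γ)
    (O : S → A → S → Ω) (v : S × Q × Set (S × Q)) (α : A) : S × Q × Set (S × Q) :=
  (T v.1 α, δ v.2.1 (L (T v.1 α)), beliefUpdate T δ L O v.2.2 (O v.1 α (T v.1 α)))

/-- The target set `𝓕_O` of opaque-winning states: `q ∈ F` and the belief
intersects `S × (Q \ F)`. -/
def FO {S Q : Type} (F : Set Q) : Set (S × Q × Set (S × Q)) :=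
  {v | v.2.1 ∈ F ∧ ∃ p ∈ v.2.2, p.2 ∉ F}

/-- The target set `𝓕 = S × F × 2^(S×Q)` of winning states. -/
def Fwin {S Q : Type} (F : Set Q) : Set (S × Q × Set (S × Q)) :=
  {v | v.2.1 ∈ F}

/-- The history of actions taken before step `i`. -/
def hist {A : Type} (a : ℕ → A) (i : ℕ) : List A :=
  List.ofFn (fun j : Fin i => a j.1)

/-- An infinite play `(vs, a)` of the belief-augmented game from `v`,
consistent with P1's strategy `π1` (used on P1's turns, `turn = true`) and
P2's strategy `π2` (used on P2's turns).  Since the game is deterministic,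
a history from a fixed start is identified with its action sequence. -/
def ConsistentV {S A Q Ω Γ : Type} (turn : S → Bool) (T : S → A → S)
    (δ : Q → Γ → Q) (L : S → Γ) (O : S → A → S → Ω)
    (π1 π2 : List A → A) (v : S × Q × Set (S × Q))
    (vs : ℕ → S × Q × Set (S × Q)) (a : ℕ → A) : Prop :=
  vs 0 = v ∧ (∀ i, vs (i + 1) = Δb T δ L O (vs i) (a i)) ∧
  (∀ i, turn (vs i).1 = true → a i = π1 (hist a i)) ∧
  (∀ i, turn (vs i).1 = false → a i = π2 (hist a i))

/-- Determinism: given the strategies, the consistent play is unique. -/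
theorem consistentV_unique {S A Q Ω Γ : Type} {turn : S → Bool} {T : S → A → S}
    {δ : Q → Γ → Q} {L : S → Γ} {O : S → A → S → Ω}
    {π1 π2 : List A → A} {v : S × Q × Set (S × Q)}
    {vs vs' : ℕ → S × Q × Set (S × Q)} {a a' : ℕ → A}
    (h : ConsistentV turn T δ L O π1 π2 v vs a)
    (h' : ConsistentV turn T δ L O π1 π2 v vs' a') :
    ∀ i, a i = a' i ∧ vs i = vs' i := by
  obtain ⟨h0, hstep, hp1, hp2⟩ := h
  obtain ⟨h0', hstep', hp1', hp2'⟩ := h'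
  intro i
  induction i using Nat.strong_induction_on with
  | _ i IH =>
    have hvs : vs i = vs' i := by
      cases i with
      | zero => rw [h0, h0']
      | succ j =>
        rw [hstep, hstep', (IH j (Nat.lt_succ_self j)).2,
          (IH j (Nat.lt_succ_self j)).1]
    have hhist : hist a i = hist a' i := by
      unfold hist; congr 1; funext j; exact (IH j.1 j.2).1
    refine ⟨?_, hvs⟩
    cases ht : turn (vs i).1 with
    | true => rw [hp1 i ht, hp1' i (hvs ▸ ht), hhist]
    | false => rw [hp2 i ht, hp2' i (hvs ▸ ht), hhist]

/-- if from `v` P1 can surely reach `𝓕` but `v` is not in P1's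
sure-winning region for `◊𝓕_O`, then against any P1 strategy that surely
reaches `𝓕` from `v`, P2 has a strategy (a safety strategy avoiding
`Win₁(𝓕_O)`) making every resulting play reach a state whose belief is
contained in `S × F`: the secret is surely revealed when satisfied. -/
theorem secret_revealed_outside_opaque_region
    {S A Q Ω Γ : Type} [Fintype S] [Fintype A] [Fintype Q]
    (turn : S → Bool) (T : S → A → S) (δ : Q → Γ → Q) (L : S → Γ)
    (O : S → A → S → Ω) (F : Set Q)
    (habs : ∀ q ∈ F, ∀ σ : Γ, δ q σ = q)
    (v : S × Q × Set (S × Q))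
    (hwin : ∃ π1 : List A → A, ∀ π2 : List A → A,
        ∀ (vs : ℕ → S × Q × Set (S × Q)) (a : ℕ → A),
        ConsistentV turn T δ L O π1 π2 v vs a → ∃ n, vs n ∈ Fwin F)
    (hnotopaque : ¬ ∃ π1 : List A → A, ∀ π2 : List A → A,
        ∀ (vs : ℕ → S × Q × Set (S × Q)) (a : ℕ → A),
        ConsistentV turn T δ L O π1 π2 v vs a → ∃ n, vs n ∈ FO F) :
    ∀ π1 : List A → A,
      (∀ π2 : List A → A, ∀ (vs : ℕ → S × Q × Set (S × Q)) (a : ℕ → A),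
        ConsistentV turn T δ L O π1 π2 v vs a → ∃ n, vs n ∈ Fwin F) →
      ∃ π2 : List A → A, ∀ (vs : ℕ → S × Q × Set (S × Q)) (a : ℕ → A),
        ConsistentV turn T δ L O π1 π2 v vs a →
        ∃ k, (vs k).2.1 ∈ F ∧ ∀ p ∈ (vs k).2.2, p.2 ∈ F := by
  intro π1 hπ1
  push_neg at hnotopaque
  obtain ⟨π2, vs, a, hc, hno⟩ := hnotopaque π1
  refine ⟨π2, fun vs' a' hc' => ?_⟩
  obtain ⟨n, hn⟩ := hπ1 π2 vs a hc
  have hF : (vs n).2.1 ∈ F := hn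
  have hnoFO : vs n ∉ FO F := hno n
  have hb : ∀ p ∈ (vs n).2.2, p.2 ∈ F := by
    intro p hp
    by_contra hpF
    exact hnoFO ⟨hF, p, hp, hpF⟩
  have heq : vs' n = vs n := ((consistentV_unique hc' hc) n).2
  exact ⟨n, heq ▸ hF, heq ▸ hb⟩
end

section
/- Suppose from state v of the belief-augmented game Player 1 can sure-win the reachability objective ◊𝓕 but cannot sure-win ◊𝓕_O (with 𝓕_O ⊆ 𝓕 as defined). Then for every (possibly randomized) Player 1 strategy π_1 that guarantees reaching 𝓕 surely, and Player 2's safety strategy π_2 avoiding Win_1(𝓕_O), the probability that the induced play is opacity-enforcing winning is zero; hence Player 1 has no winning and positive opacity-enforcing strategy from v. -/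
/-- An infinite play `(vs, a)` of the belief-augmented game from `v`
consistent with the randomized strategies `π1` (on P1's turns) and `π2`
(on P2's turns): every action taken lies in the support of the distribution
prescribed by the acting player's strategy on the current history. -/
def RConsistentV {S A Q Ω Γ : Type} (turn : S → Bool) (T : S → A → S)
    (δ : Q → Γ → Q) (L : S → Γ) (O : S → A → S → Ω)
    (π1 π2 : List A → PMF A) (v : S × Q × Set (S × Q))
    (vs : ℕ → S × Q × Set (S × Q)) (a : ℕ → A) : Prop :=
  vs 0 = v ∧ (∀ i, vs (i + 1) = Δb T δ L O (vs i) (a i)) ∧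
  (∀ i, turn (vs i).1 = true → a i ∈ (π1 (hist a i)).support) ∧
  (∀ i, turn (vs i).1 = false → a i ∈ (π2 (hist a i)).support)

section Aux

variable {S A Q Ω Γ : Type}

/-- The set of states from which P1 has a (randomized) strategy that surely
reaches `𝓕_O`. -/
def Wset (turn : S → Bool) (T : S → A → S) (δ : Q → Γ → Q) (L : S → Γ)
    (O : S → A → S → Ω) (F : Set Q) : Set (S × Q × Set (S × Q)) :=
  {u | ∃ π1 : List A → PMF A, ∀ π2 : List A → PMF A,
    ∀ (vs : ℕ → S × Q × Set (S × Q)) (a : ℕ → A),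
    RConsistentV turn T δ L O π1 π2 u vs a → ∃ n, vs n ∈ FO F}

lemma hist_succ (a : ℕ → A) (i : ℕ) :
    hist a (i + 1) = a 0 :: hist (fun j => a (j + 1)) i := by
  simp [hist, List.ofFn_succ]

lemma hist_concat (a : ℕ → A) (i : ℕ) :
    hist a (i + 1) = hist a i ++ [a i] := by
  simp only [hist]
  rw [List.ofFn_succ']
  simp [List.concat_eq_append]

variable (turn : S → Bool) (T : S → A → S) (δ : Q → Γ → Q) (L : S → Γ)
    (O : S → A → S → Ω) (F : Set Q)

lemma shift_consistent (π1 π2 : List A → PMF A) (u : S × Q × Set (S × Q))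
    (vs : ℕ → S × Q × Set (S × Q)) (a : ℕ → A)
    (h : RConsistentV turn T δ L O π1 π2 u vs a) :
    RConsistentV turn T δ L O (fun l => π1 (a 0 :: l)) (fun l => π2 (a 0 :: l))
      (vs 1) (fun i => vs (i + 1)) (fun i => a (i + 1)) := by
  obtain ⟨h0, hstep, h1, h2⟩ := h
  refine ⟨rfl, fun i => hstep (i + 1), fun i ht => ?_, fun i ht => ?_⟩
  · have := h1 (i + 1) ht
    rwa [hist_succ] at this
  · have := h2 (i + 1) ht
    rwa [hist_succ] at this

lemma Wset_of_step (u : S × Q × Set (S × Q)) (a0 : A)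
    (ht : turn u.1 = true) (hW : Δb T δ L O u a0 ∈ Wset turn T δ L O F) :
    u ∈ Wset turn T δ L O F := by
  obtain ⟨π1, hπ1⟩ := hW
  refine ⟨fun l => match l with | [] => PMF.pure a0 | _ :: t => π1 t,
    fun π2 vs a hc => ?_⟩
  have ha0 : a 0 = a0 := by
    have := hc.2.2.1 0 (by rw [hc.1]; exact ht)
    simp only [hist, List.ofFn_zero] at this
    simpa [PMF.mem_support_iff] using this
  have hv1 : vs 1 = Δb T δ L O u a0 := by
    rw [hc.2.1 0, hc.1, ha0]
  have hc' := shift_consistent turn T δ L O _ π2 u vs a hc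
  rw [ha0, hv1] at hc'
  obtain ⟨n, hn⟩ := hπ1 _ _ _ hc'
  exact ⟨n + 1, hn⟩

lemma Wset_of_all [Nonempty A] (u : S × Q × Set (S × Q))
    (hW : ∀ a0 : A, Δb T δ L O u a0 ∈ Wset turn T δ L O F) :
    u ∈ Wset turn T δ L O F := by
  choose π1c hπ1c using hW
  refine ⟨fun l => match l with
    | [] => PMF.pure (Classical.arbitrary A)
    | a0 :: t => π1c a0 t, fun π2 vs a hc => ?_⟩
  have hv1 : vs 1 = Δb T δ L O u (a 0) := by rw [hc.2.1 0, hc.1]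
  have hc' := shift_consistent turn T δ L O _ π2 u vs a hc
  rw [hv1] at hc'
  obtain ⟨n, hn⟩ := hπ1c (a 0) _ _ _ hc'
  exact ⟨n + 1, hn⟩

lemma FO_subset_Wset [Nonempty A] (u : S × Q × Set (S × Q)) (hu : u ∈ FO F) :
    u ∈ Wset turn T δ L O F :=
  ⟨fun _ => PMF.pure (Classical.arbitrary A),
    fun _π2 vs _a hc => ⟨0, hc.1 ▸ hu⟩⟩

lemma vs_eq_foldl (π1 π2 : List A → PMF A) (u : S × Q × Set (S × Q))
    (vs : ℕ → S × Q × Set (S × Q)) (a : ℕ → A)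
    (hc : RConsistentV turn T δ L O π1 π2 u vs a) (n : ℕ) :
    vs n = (hist a n).foldl (Δb T δ L O) u := by
  induction n with
  | zero => simpa [hist] using hc.1
  | succ n ih => rw [hist_concat, List.foldl_append, hc.2.1 n, ih]; rfl

end Aux

/-- suppose from `v` P1 can surely reach `𝓕` but cannot surely
reach `𝓕_O` (even with randomized strategies).  Then (i) for every randomized
P1 strategy that surely reaches `𝓕`, P2 has a strategy under which no induced
play ever visits `𝓕_O` — the probability of an opacity-enforcing winning play
is zero; and (ii) P1 has no winning and positive opacity-enforcing strategy
from `v`: no strategy that surely reaches `𝓕` and, against every P2 strategy,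
gives positive probability both to plays whose first visit to `𝓕` is in
`𝓕_O` (opaque) and to plays whose first visit to `𝓕` is in `𝓕 \ 𝓕_O`
(revealing). -/
theorem no_positive_opacity_enforcing_strategy
    {S A Q Ω Γ : Type} [Fintype S] [Fintype A] [Fintype Q]
    (turn : S → Bool) (T : S → A → S) (δ : Q → Γ → Q) (L : S → Γ)
    (O : S → A → S → Ω) (F : Set Q)
    (habs : ∀ q ∈ F, ∀ σ : Γ, δ q σ = q)
    (v : S × Q × Set (S × Q))
    (hwin : ∃ π1 : List A → PMF A, ∀ π2 : List A → PMF A,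
        ∀ (vs : ℕ → S × Q × Set (S × Q)) (a : ℕ → A),
        RConsistentV turn T δ L O π1 π2 v vs a → ∃ n, vs n ∈ Fwin F)
    (hnotopaque : ¬ ∃ π1 : List A → PMF A, ∀ π2 : List A → PMF A,
        ∀ (vs : ℕ → S × Q × Set (S × Q)) (a : ℕ → A),
        RConsistentV turn T δ L O π1 π2 v vs a → ∃ n, vs n ∈ FO F) :
    (∀ π1 : List A → PMF A,
      (∀ π2 : List A → PMF A, ∀ (vs : ℕ → S × Q × Set (S × Q)) (a : ℕ → A),
        RConsistentV turn T δ L O π1 π2 v vs a → ∃ n, vs n ∈ Fwin F) →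
      ∃ π2 : List A → PMF A, ∀ (vs : ℕ → S × Q × Set (S × Q)) (a : ℕ → A),
        RConsistentV turn T δ L O π1 π2 v vs a → ∀ n, vs n ∉ FO F) ∧
    ¬ ∃ π1 : List A → PMF A,
      (∀ π2 : List A → PMF A, ∀ (vs : ℕ → S × Q × Set (S × Q)) (a : ℕ → A),
        RConsistentV turn T δ L O π1 π2 v vs a → ∃ n, vs n ∈ Fwin F) ∧
      (∀ π2 : List A → PMF A,
        (∃ (vs : ℕ → S × Q × Set (S × Q)) (a : ℕ → A),
          RConsistentV turn T δ L O π1 π2 v vs a ∧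
          ∃ n, vs n ∈ FO F ∧ ∀ m < n, vs m ∉ Fwin F) ∧
        (∃ (vs : ℕ → S × Q × Set (S × Q)) (a : ℕ → A),
          RConsistentV turn T δ L O π1 π2 v vs a ∧
          ∃ n, vs n ∈ Fwin F ∧ vs n ∉ FO F ∧ ∀ m < n, vs m ∉ Fwin F)) := by
  classical
  have hnW : v ∉ Wset turn T δ L O F := hnotopaque
  have hpart1 : ∀ π1 : List A → PMF A,
      (∀ π2 : List A → PMF A, ∀ (vs : ℕ → S × Q × Set (S × Q)) (a : ℕ → A),
        RConsistentV turn T δ L O π1 π2 v vs a → ∃ n, vs n ∈ Fwin F) →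
      ∃ π2 : List A → PMF A, ∀ (vs : ℕ → S × Q × Set (S × Q)) (a : ℕ → A),
        RConsistentV turn T δ L O π1 π2 v vs a → ∀ n, vs n ∉ FO F := by
    intro π1 _hwin1
    have hA : Nonempty A := ⟨((π1 []).support_nonempty).choose⟩
    set safe : (S × Q × Set (S × Q)) → A := fun u =>
      if h : ∃ a0, Δb T δ L O u a0 ∉ Wset turn T δ L O F then h.choose
      else Classical.arbitrary A with hsafe
    refine ⟨fun l => PMF.pure (safe (l.foldl (Δb T δ L O) v)), fun vs a hc n => ?_⟩
    have hnotW : ∀ n, vs n ∉ Wset turn T δ L O F := by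
      intro n
      induction n with
      | zero => rw [hc.1]; exact hnW
      | succ n ih =>
        rw [hc.2.1 n]
        cases ht : turn (vs n).1 with
        | true =>
          intro hmem
          exact ih (Wset_of_step turn T δ L O F (vs n) (a n) ht hmem)
        | false =>
          have hex : ∃ a0, Δb T δ L O (vs n) a0 ∉ Wset turn T δ L O F := by
            by_contra h
            push_neg at h
            exact ih (Wset_of_all turn T δ L O F (vs n) h)
          have han : a n = safe (vs n) := by
            have hmem := hc.2.2.2 n ht
            rw [vs_eq_foldl turn T δ L O _ _ v vs a hc n]
            simpa [PMF.mem_support_iff] using hmem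
          rw [han, hsafe]
          simp only [dif_pos hex]
          exact hex.choose_spec
    exact fun hFO => hnotW n (FO_subset_Wset turn T δ L O F (vs n) hFO)
  refine ⟨hpart1, ?_⟩
  rintro ⟨π1, hwin1, hpos⟩
  obtain ⟨π2, hπ2⟩ := hpart1 π1 hwin1
  obtain ⟨⟨vs, a, hc, n, hFO, -⟩, -⟩ := hpos π2
  exact hπ2 vs a hc n hFO
end
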